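/- Let n ≥ 1, let Σ be an n×n real symmetric positive semidefinite matrix and Ω an n×n real symmetric positive definite matrix. Then the Kyle cross-impact matrix Λ_kyle(Σ,Ω) := (√Ω)⁻¹ · √(√Ω Σ √Ω) · (√Ω)⁻¹ is symmetric, positive semidefinite, and satisfies the return covariance consistency identity Λ_kyle(Σ,Ω) · Ω · Λ_kyle(Σ,Ω)ᵀ = Σ. -/

import Mathlib

open Matrix
open scoped Classical

/-- `sqrtm A` is the unique symmetric positive semidefinite square root of a
symmetric positive semidefinite real matrix `A` (junk value `0` otherwise). -/
noncomputable def sqrtm {n : ℕ} (A : Matrix (Fin n) (Fin n) ℝ) : Matrix (Fin n) (Fin n) ℝ :=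
  if h : A.PosSemidef then
    (h.1.eigenvectorUnitary : Matrix (Fin n) (Fin n) ℝ) *
      diagonal ((↑) ∘ (h.1.eigenvalues · |>.sqrt)) *
      (star h.1.eigenvectorUnitary : Matrix (Fin n) (Fin n) ℝ)
  else 0

/-- The Kyle cross-impact matrix `Λ_kyle(Σ,Ω) = (√Ω)⁻¹ √(√Ω Σ √Ω) (√Ω)⁻¹`. -/
noncomputable def kyle {n : ℕ} (S W : Matrix (Fin n) (Fin n) ℝ) : Matrix (Fin n) (Fin n) ℝ :=
  (sqrtm W)⁻¹ * sqrtm (sqrtm W * S * sqrtm W) * (sqrtm W)⁻¹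

theorem sqrtm_posSemidef' {n : ℕ} (A : Matrix (Fin n) (Fin n) ℝ) (h : A.PosSemidef) :
    (sqrtm A).PosSemidef := by
  rw [sqrtm, dif_pos h]
  have hd : (diagonal ((↑) ∘ (h.1.eigenvalues · |>.sqrt)) : Matrix (Fin n) (Fin n) ℝ).PosSemidef :=
    PosSemidef.diagonal (fun i => by simp [Real.sqrt_nonneg])
  have := hd.mul_mul_conjTranspose_same (h.1.eigenvectorUnitary : Matrix (Fin n) (Fin n) ℝ)
  simpa [Unitary.coe_star, star_eq_conjTranspose] using this

theorem sqrtm_mul_self' {n : ℕ} (A : Matrix (Fin n) (Fin n) ℝ) (h : A.PosSemidef) :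
    sqrtm A * sqrtm A = A := by
  rw [sqrtm, dif_pos h]
  conv_rhs => rw [h.1.spectral_theorem, Unitary.conjStarAlgAut_apply]
  have hU : (star h.1.eigenvectorUnitary : Matrix (Fin n) (Fin n) ℝ) *
      (h.1.eigenvectorUnitary : Matrix (Fin n) (Fin n) ℝ) = 1 := Unitary.coe_star_mul_self _
  have hD : (diagonal ((↑) ∘ (h.1.eigenvalues · |>.sqrt)) : Matrix (Fin n) (Fin n) ℝ) *
      diagonal ((↑) ∘ (h.1.eigenvalues · |>.sqrt)) = diagonal (RCLike.ofReal ∘ h.1.eigenvalues) := by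
    rw [diagonal_mul_diagonal]
    congr 1; funext i
    simp [Real.mul_self_sqrt (h.eigenvalues_nonneg i)]
  calc _ = (h.1.eigenvectorUnitary : Matrix (Fin n) (Fin n) ℝ) *
      (diagonal ((↑) ∘ (h.1.eigenvalues · |>.sqrt)) * ((star h.1.eigenvectorUnitary : Matrix (Fin n) (Fin n) ℝ) *
      (h.1.eigenvectorUnitary : Matrix (Fin n) (Fin n) ℝ)) * diagonal ((↑) ∘ (h.1.eigenvalues · |>.sqrt))) *
      (star h.1.eigenvectorUnitary : Matrix (Fin n) (Fin n) ℝ) := by simp only [Matrix.mul_assoc]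
    _ = _ := by rw [hU, Matrix.mul_one, hD]

/-- the Kyle cross-impact matrix is symmetric, positive semidefinite and
return covariance consistent. -/
theorem kyle_isSymm_posSemidef_covConsistent {n : ℕ} (hn : 1 ≤ n)
    (S W : Matrix (Fin n) (Fin n) ℝ) (hS : S.PosSemidef) (hW : W.PosDef) :
    (kyle S W).IsSymm ∧ (kyle S W).PosSemidef ∧ kyle S W * W * (kyle S W)ᵀ = S := by
  have hWsd : W.PosSemidef := hW.posSemidef
  set R := sqrtm W with hRdef
  have hR : R = sqrtm W := hRdef
  have hRsd : R.PosSemidef := hR ▸ sqrtm_posSemidef' W hWsd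
  have hRR : R * R = W := hR ▸ sqrtm_mul_self' W hWsd
  have hRH : Rᴴ = R := hRsd.isHermitian.eq
  -- R is invertible
  have hdet : IsUnit R.det := by
    have h1 : R.det * R.det = W.det := by rw [← det_mul, hRR]
    have h2 : W.det ≠ 0 := ne_of_gt hW.det_pos
    exact isUnit_iff_ne_zero.mpr fun h => h2 (by rw [← h1, h]; ring)
  have hRSRsd : (R * S * R).PosSemidef := by
    have := hS.mul_mul_conjTranspose_same R
    rwa [hRH] at this
  set B := sqrtm (R * S * R) with hBdef
  have hB : B = sqrtm (R * S * R) := hBdef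
  have hBsd : B.PosSemidef := hB ▸ sqrtm_posSemidef' _ hRSRsd
  have hBB : B * B = R * S * R := hB ▸ sqrtm_mul_self' _ hRSRsd
  have hRinvH : (R⁻¹)ᴴ = R⁻¹ := by rw [conjTranspose_nonsing_inv, hRH]
  have hk : kyle S W = R⁻¹ * B * R⁻¹ := rfl
  have hksd : (kyle S W).PosSemidef := by
    rw [hk]
    have := hBsd.mul_mul_conjTranspose_same R⁻¹
    rwa [hRinvH] at this
  have hksymm : (kyle S W).IsSymm := by
    have := hksd.isHermitian.eq
    rwa [conjTranspose_eq_transpose_of_trivial] at this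
  refine ⟨hksymm, hksd, ?_⟩
  rw [hksymm.eq, hk, ← hRR]
  calc R⁻¹ * B * R⁻¹ * (R * R) * (R⁻¹ * B * R⁻¹)
      = R⁻¹ * B * (R⁻¹ * R) * (R * R⁻¹) * B * R⁻¹ := by noncomm_ring
    _ = R⁻¹ * (B * B) * R⁻¹ := by
        rw [nonsing_inv_mul R hdet, mul_nonsing_inv R hdet]; noncomm_ring
    _ = (R⁻¹ * R) * S * (R * R⁻¹) := by rw [hBB]; noncomm_ring
    _ = S := by rw [nonsing_inv_mul R hdet, mul_nonsing_inv R hdet]; noncomm_ring
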